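/- Let G be a group, f : G → ℂ a positive definite function with f(e) = 1, taking values of modulus at most 1. Then for all x, y ∈ G, |f(x) - f(y)|² ≤ 2|1 - Re f(x⁻¹y)| (Krein's inequality). -/

import Mathlib

open scoped ComplexOrder

/-- `f : G → ℂ` is positive definite. -/
def IsPosDefFn {G : Type*} [Group G] (f : G → ℂ) : Prop :=
  ∀ (n : ℕ) (g : Fin n → G) (c : Fin n → ℂ),
    0 ≤ ∑ i, ∑ j, (starRingEnd ℂ) (c i) * c j * f ((g i)⁻¹ * g j)

lemma herm {G : Type*} [Group G] (f : G → ℂ) (hpd : IsPosDefFn f) (g : G) :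
    f g⁻¹ = (starRingEnd ℂ) (f g) := by
  have h0 := hpd 1 ![1] ![1]
  have h1 := hpd 2 ![1, g] ![1, 1]
  have h2 := hpd 2 ![1, g] ![1, Complex.I]
  simp [Fin.sum_univ_one, Fin.sum_univ_two, Complex.le_def] at h0 h1 h2
  apply Complex.ext
  · simp [Complex.conj_re]; linarith [h1.2, h2.2, h0.2]
  · simp [Complex.conj_im]; linarith [h1.2, h2.2, h0.2]

theorem stmt_10 {G : Type*} [Group G] (f : G → ℂ) (hpd : IsPosDefFn f)
    (h1 : f 1 = 1) (hb : ∀ g : G, ‖f g‖ ≤ 1) :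
    ∀ x y : G, ‖f x - f y‖ ^ 2 ≤ 2 * |1 - (f (x⁻¹ * y)).re| := by
  intro x y
  set d2 : ℝ := ‖f x - f y‖ ^ 2 with hd2
  have hd2' : d2 = ((f x).re - (f y).re) ^ 2 + ((f x).im - (f y).im) ^ 2 := by
    rw [hd2, Complex.sq_norm, Complex.normSq_apply]; simp; ring
  have e1 : f x⁻¹ = (starRingEnd ℂ) (f x) := herm f hpd x
  have e2 : f y⁻¹ = (starRingEnd ℂ) (f y) := herm f hpd y
  have e3 : f (y⁻¹ * x) = (starRingEnd ℂ) (f (x⁻¹ * y)) := by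
    have := herm f hpd (x⁻¹ * y)
    rwa [mul_inv_rev, inv_inv] at this
  have key := hpd 3 ![1, x, y]
    ![(-d2 : ℂ), (starRingEnd ℂ) (f x - f y), -((starRingEnd ℂ) (f x - f y))]
  simp [Fin.sum_univ_three, h1, e1, e2, e3, Complex.le_def] at key
  obtain ⟨hre, -⟩ := key
  have habs : (1 : ℝ) - (f (x⁻¹ * y)).re ≤ |1 - (f (x⁻¹ * y)).re| := le_abs_self _
  have habs0 : (0 : ℝ) ≤ |1 - (f (x⁻¹ * y)).re| := abs_nonneg _
  rcases eq_or_lt_of_le (by positivity : (0:ℝ) ≤ d2) with h | h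
  · linarith
  · nlinarith [hre, hd2', h, habs, habs0]
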